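/- Let A be an m×n real matrix, B an n×m real matrix, and p = min(m,n). Then there exist matrices V ∈ ℝ^{m×p} and U ∈ ℝ^{n×p} with orthonormal columns, and upper Hessenberg matrices H, F ∈ ℝ^{p×p} with nonnegative subdiagonal entries, such that Vᵀ A U = H and Uᵀ B V = F. -/
import Mathlib


open Matrix

private lemma dot_sum {M k : ℕ} (v : Fin M → ℝ) (f : Fin k → Fin M → ℝ) :
    v ⬝ᵥ (∑ j, f j) = ∑ j, v ⬝ᵥ f j := by
  simp only [dotProduct, Finset.sum_apply, Finset.mul_sum]
  exact Finset.sum_comm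

private lemma dot_self_pos {M : ℕ} {y : Fin M → ℝ} (hy : y ≠ 0) : 0 < y ⬝ᵥ y := by
  have h1 : 0 ≤ y ⬝ᵥ y := Finset.sum_nonneg fun i _ => mul_self_nonneg (y i)
  rcases h1.lt_or_eq with h | h
  · exact h
  · exact absurd (dotProduct_self_eq_zero.mp h.symm) hy

private lemma exists_orth {M k : ℕ} (hk : k < M) (v : Fin k → Fin M → ℝ) :
    ∃ y : Fin M → ℝ, y ≠ 0 ∧ ∀ i, v i ⬝ᵥ y = 0 := by
  classical
  let L : (Fin M → ℝ) →ₗ[ℝ] (Fin k → ℝ) :=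
    { toFun := fun z i => v i ⬝ᵥ z
      map_add' := by intro a b; funext i; simp [dotProduct_add]
      map_smul' := by intro a b; funext i; simp [dotProduct_smul] }
  have hinj : ¬ Function.Injective L := by
    intro h
    have hle := LinearMap.finrank_le_finrank_of_injective h
    rw [Module.finrank_fin_fun, Module.finrank_fin_fun] at hle
    omega
  rw [← LinearMap.ker_eq_bot] at hinj
  obtain ⟨y, hy, hy0⟩ := Submodule.exists_mem_ne_zero_of_ne_bot hinj
  exact ⟨y, hy0, fun i => congrFun (LinearMap.mem_ker.mp hy) i⟩

/-- Key Gram–Schmidt extension step. -/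
private lemma key {M k : ℕ} (hk : k < M) (v : Fin k → Fin M → ℝ)
    (hv : ∀ i j, v i ⬝ᵥ v j = if i = j then 1 else 0) (t : Fin M → ℝ) :
    ∃ (x : Fin M → ℝ) (c : Fin k → ℝ) (d : ℝ),
      x ⬝ᵥ x = 1 ∧ (∀ i, v i ⬝ᵥ x = 0) ∧ 0 ≤ d ∧
      t = (∑ i, c i • v i) + d • x := by
  classical
  set r : Fin M → ℝ := t - ∑ i, (v i ⬝ᵥ t) • v i with hrdef
  have hproj : ∀ w : Fin M → ℝ, (∀ i, v i ⬝ᵥ w = 0) →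
      w ⬝ᵥ (∑ j, (v j ⬝ᵥ t) • v j) = 0 := by
    intro w hw
    rw [dot_sum]
    refine Finset.sum_eq_zero fun j _ => ?_
    rw [dotProduct_smul, dotProduct_comm w (v j), hw j, smul_zero]
  have hr : ∀ i, v i ⬝ᵥ r = 0 := by
    intro i
    have h2 : v i ⬝ᵥ (∑ j, (v j ⬝ᵥ t) • v j) = v i ⬝ᵥ t := by
      rw [dot_sum]
      have h3 : ∀ j ∈ Finset.univ, v i ⬝ᵥ ((v j ⬝ᵥ t) • v j)
          = if j = i then v i ⬝ᵥ t else 0 := by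
        intro j _
        rw [dotProduct_smul, hv i j]
        rcases eq_or_ne j i with h | h
        · subst h; simp
        · simp [h, Ne.symm h]
      rw [Finset.sum_congr rfl h3]
      simp
    simp [hrdef, dotProduct_sub, h2]
  by_cases hr0 : r = 0
  · -- t lies in the span of v; pick any new orthonormal direction.
    have ht : t = ∑ i, (v i ⬝ᵥ t) • v i := by
      have h4 : t - ∑ i, (v i ⬝ᵥ t) • v i = 0 := by rw [← hrdef]; exact hr0
      exact sub_eq_zero.mp h4
    obtain ⟨y, hy0, hyv⟩ := exists_orth hk v
    have hs : 0 < y ⬝ᵥ y := dot_self_pos hy0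
    have hsq : Real.sqrt (y ⬝ᵥ y) ≠ 0 := ne_of_gt (Real.sqrt_pos.mpr hs)
    refine ⟨(Real.sqrt (y ⬝ᵥ y))⁻¹ • y, fun i => v i ⬝ᵥ t, 0, ?_, ?_, le_refl 0, ?_⟩
    · rw [smul_dotProduct, dotProduct_smul, smul_eq_mul, smul_eq_mul]
      rw [← mul_assoc, ← mul_inv, Real.mul_self_sqrt hs.le]
      field_simp
    · intro i
      rw [dotProduct_smul, hyv i, smul_zero]
    · rw [zero_smul, add_zero]; exact ht
  · have hs : 0 < r ⬝ᵥ r := dot_self_pos hr0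
    have hsq : Real.sqrt (r ⬝ᵥ r) ≠ 0 := ne_of_gt (Real.sqrt_pos.mpr hs)
    refine ⟨(Real.sqrt (r ⬝ᵥ r))⁻¹ • r, fun i => v i ⬝ᵥ t, Real.sqrt (r ⬝ᵥ r),
      ?_, ?_, Real.sqrt_nonneg _, ?_⟩
    · rw [smul_dotProduct, dotProduct_smul, smul_eq_mul, smul_eq_mul]
      rw [← mul_assoc, ← mul_inv, Real.mul_self_sqrt hs.le]
      field_simp
    · intro i
      rw [dotProduct_smul, hr i, smul_zero]
    · rw [smul_smul, mul_inv_cancel₀ hsq, one_smul]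
      rw [hrdef]; abel

private lemma on_snoc {M k : ℕ} {v : Fin k → Fin M → ℝ} {x : Fin M → ℝ}
    (hv : ∀ i j, v i ⬝ᵥ v j = if i = j then 1 else 0)
    (hx : x ⬝ᵥ x = 1) (ho : ∀ i, v i ⬝ᵥ x = 0) :
    ∀ i j : Fin (k+1),
      (Fin.snoc v x : Fin (k+1) → Fin M → ℝ) i ⬝ᵥ (Fin.snoc v x : Fin (k+1) → Fin M → ℝ) j
        = if i = j then 1 else 0 := by
  intro i j
  induction i using Fin.lastCases with
  | last =>
    induction j using Fin.lastCases with
    | last => simp [hx]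
    | cast j =>
      rw [Fin.snoc_last, Fin.snoc_castSucc, dotProduct_comm x (v j), ho j,
        if_neg (Fin.castSucc_lt_last j).ne']
  | cast i =>
    induction j using Fin.lastCases with
    | last =>
      rw [Fin.snoc_last, Fin.snoc_castSucc, ho i, if_neg (Fin.castSucc_lt_last i).ne]
    | cast j =>
      rw [Fin.snoc_castSucc, Fin.snoc_castSucc, hv i j]
      simp [Fin.castSucc_inj]

private lemma build (m n : ℕ) (A : Matrix (Fin m) (Fin n) ℝ) (B : Matrix (Fin n) (Fin m) ℝ) :
    ∀ k : ℕ, k ≤ min m n →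
    ∃ (v : Fin k → Fin m → ℝ) (u : Fin k → Fin n → ℝ),
      (∀ i j, v i ⬝ᵥ v j = if i = j then 1 else 0) ∧
      (∀ i j, u i ⬝ᵥ u j = if i = j then 1 else 0) ∧
      (∀ j : Fin k, ∀ h : (j : ℕ) + 1 < k, ∃ c : Fin k → ℝ,
        (∀ i : Fin k, (j : ℕ) + 1 < (i : ℕ) → c i = 0) ∧ 0 ≤ c ⟨(j : ℕ) + 1, h⟩ ∧
        A *ᵥ u j = ∑ i, c i • v i) ∧
      (∀ j : Fin k, ∀ h : (j : ℕ) + 1 < k, ∃ c : Fin k → ℝ,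
        (∀ i : Fin k, (j : ℕ) + 1 < (i : ℕ) → c i = 0) ∧ 0 ≤ c ⟨(j : ℕ) + 1, h⟩ ∧
        B *ᵥ v j = ∑ i, c i • u i) := by
  intro k
  induction k with
  | zero =>
    intro _
    exact ⟨Fin.elim0, Fin.elim0, fun i => i.elim0, fun i => i.elim0,
      fun j => j.elim0, fun j => j.elim0⟩
  | succ k ih =>
    intro hk1
    obtain ⟨v, u, hv, hu, hA, hB⟩ := ih (Nat.le_of_succ_le hk1)
    have hmm : min m n ≤ m := min_le_left m n
    have hmn : min m n ≤ n := min_le_right m n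
    have hkm : k < m := by omega
    have hkn : k < n := by omega
    set tA : Fin m → ℝ :=
      if h : 0 < k then A *ᵥ u ⟨k - 1, Nat.sub_lt h one_pos⟩ else 0 with htA
    set tB : Fin n → ℝ :=
      if h : 0 < k then B *ᵥ v ⟨k - 1, Nat.sub_lt h one_pos⟩ else 0 with htB
    obtain ⟨x, cx, dx, hx1, hxo, hdx, hxt⟩ := key hkm v hv tA
    obtain ⟨y, cy, dy, hy1, hyo, hdy, hyt⟩ := key hkn u hu tB
    refine ⟨Fin.snoc v x, Fin.snoc u y, on_snoc hv hx1 hxo, on_snoc hu hy1 hyo, ?_, ?_⟩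
    · intro j hj
      have hjk : (j : ℕ) < k := by omega
      have hje : (Fin.snoc u y : Fin (k+1) → Fin n → ℝ) j = u ⟨j, hjk⟩ := by
        have hcast : j = Fin.castSucc ⟨j, hjk⟩ := Fin.ext rfl
        conv_lhs => rw [hcast]
        rw [Fin.snoc_castSucc]
      rcases Nat.lt_or_ge ((j : ℕ) + 1) k with hlt | hge
      · obtain ⟨c, hc0, hcpos, hcsum⟩ := hA ⟨j, hjk⟩ hlt
        refine ⟨Fin.snoc c 0, ?_, ?_, ?_⟩
        · intro i hi
          induction i using Fin.lastCases with
          | last => simp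
          | cast i => rw [Fin.snoc_castSucc]; exact hc0 i (by simpa using hi)
        · have heq : (⟨(j : ℕ) + 1, hj⟩ : Fin (k+1)) = Fin.castSucc ⟨(j : ℕ) + 1, hlt⟩ :=
            Fin.ext rfl
          rw [heq, Fin.snoc_castSucc]
          exact hcpos
        · rw [hje, hcsum, Fin.sum_univ_castSucc]
          simp
      · have hk0 : 0 < k := by omega
        have htAe : tA = A *ᵥ u ⟨j, hjk⟩ := by
          rw [htA, dif_pos hk0]
          exact congrArg _ (congrArg u (Fin.ext (show k - 1 = (j : ℕ) by omega)))
        refine ⟨Fin.snoc cx dx, ?_, ?_, ?_⟩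
        · intro i hi
          exact absurd hi (by have := i.isLt; omega)
        · have heq : (⟨(j : ℕ) + 1, hj⟩ : Fin (k+1)) = Fin.last k := Fin.ext (show (j : ℕ) + 1 = k by omega)
          rw [heq, Fin.snoc_last]
          exact hdx
        · rw [hje, ← htAe, hxt, Fin.sum_univ_castSucc]
          simp
    · intro j hj
      have hjk : (j : ℕ) < k := by omega
      have hje : (Fin.snoc v x : Fin (k+1) → Fin m → ℝ) j = v ⟨j, hjk⟩ := by
        have hcast : j = Fin.castSucc ⟨j, hjk⟩ := Fin.ext rfl
        conv_lhs => rw [hcast]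
        rw [Fin.snoc_castSucc]
      rcases Nat.lt_or_ge ((j : ℕ) + 1) k with hlt | hge
      · obtain ⟨c, hc0, hcpos, hcsum⟩ := hB ⟨j, hjk⟩ hlt
        refine ⟨Fin.snoc c 0, ?_, ?_, ?_⟩
        · intro i hi
          induction i using Fin.lastCases with
          | last => simp
          | cast i => rw [Fin.snoc_castSucc]; exact hc0 i (by simpa using hi)
        · have heq : (⟨(j : ℕ) + 1, hj⟩ : Fin (k+1)) = Fin.castSucc ⟨(j : ℕ) + 1, hlt⟩ :=
            Fin.ext rfl
          rw [heq, Fin.snoc_castSucc]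
          exact hcpos
        · rw [hje, hcsum, Fin.sum_univ_castSucc]
          simp
      · have hk0 : 0 < k := by omega
        have htBe : tB = B *ᵥ v ⟨j, hjk⟩ := by
          rw [htB, dif_pos hk0]
          exact congrArg _ (congrArg v (Fin.ext (show k - 1 = (j : ℕ) by omega)))
        refine ⟨Fin.snoc cy dy, ?_, ?_, ?_⟩
        · intro i hi
          exact absurd hi (by have := i.isLt; omega)
        · have heq : (⟨(j : ℕ) + 1, hj⟩ : Fin (k+1)) = Fin.last k := Fin.ext (show (j : ℕ) + 1 = k by omega)
          rw [heq, Fin.snoc_last]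
          exact hdy
        · rw [hje, ← htBe, hyt, Fin.sum_univ_castSucc]
          simp

theorem stmt0 (m n : ℕ) (A : Matrix (Fin m) (Fin n) ℝ) (B : Matrix (Fin n) (Fin m) ℝ) :
    ∃ (V : Matrix (Fin m) (Fin (min m n)) ℝ) (U : Matrix (Fin n) (Fin (min m n)) ℝ)
      (H F : Matrix (Fin (min m n)) (Fin (min m n)) ℝ),
      Vᵀ * V = 1 ∧ Uᵀ * U = 1 ∧
      (∀ i j : Fin (min m n), (j : ℕ) + 1 < (i : ℕ) → H i j = 0) ∧
      (∀ i j : Fin (min m n), (j : ℕ) + 1 < (i : ℕ) → F i j = 0) ∧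
      (∀ i j : Fin (min m n), (i : ℕ) = (j : ℕ) + 1 → 0 ≤ H i j) ∧
      (∀ i j : Fin (min m n), (i : ℕ) = (j : ℕ) + 1 → 0 ≤ F i j) ∧
      Vᵀ * A * U = H ∧ Uᵀ * B * V = F := by
  classical
  obtain ⟨v, u, hv, hu, hA, hB⟩ := build m n A B (min m n) le_rfl
  set V : Matrix (Fin m) (Fin (min m n)) ℝ := Matrix.of fun r i => v i r with hV
  set U : Matrix (Fin n) (Fin (min m n)) ℝ := Matrix.of fun s i => u i s with hU
  have hentA : ∀ i j : Fin (min m n), (Vᵀ * A * U) i j = v i ⬝ᵥ (A *ᵥ u j) := by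
    intro i j
    simp only [Matrix.mul_apply, Matrix.transpose_apply, Matrix.of_apply, dotProduct,
      Matrix.mulVec, Finset.sum_mul, Finset.mul_sum, hV, hU]
    rw [Finset.sum_comm]
    simp [mul_assoc]
  have hentB : ∀ i j : Fin (min m n), (Uᵀ * B * V) i j = u i ⬝ᵥ (B *ᵥ v j) := by
    intro i j
    simp only [Matrix.mul_apply, Matrix.transpose_apply, Matrix.of_apply, dotProduct,
      Matrix.mulVec, Finset.sum_mul, Finset.mul_sum, hV, hU]
    rw [Finset.sum_comm]
    simp [mul_assoc]
  have hcoefA : ∀ (j : Fin (min m n)) (h : (j : ℕ) + 1 < min m n) (c : Fin (min m n) → ℝ),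
      A *ᵥ u j = (∑ l, c l • v l) → ∀ i, (Vᵀ * A * U) i j = c i := by
    intro j h c hc i
    rw [hentA i j, hc, dot_sum]
    have h5 : ∀ l ∈ Finset.univ, v i ⬝ᵥ (c l • v l) = if l = i then c i else 0 := by
      intro l _
      rw [dotProduct_smul, hv i l]
      rcases eq_or_ne l i with h6 | h6
      · subst h6; simp
      · simp [h6, Ne.symm h6]
    rw [Finset.sum_congr rfl h5]
    simp
  have hcoefB : ∀ (j : Fin (min m n)) (h : (j : ℕ) + 1 < min m n) (c : Fin (min m n) → ℝ),
      B *ᵥ v j = (∑ l, c l • u l) → ∀ i, (Uᵀ * B * V) i j = c i := by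
    intro j h c hc i
    rw [hentB i j, hc, dot_sum]
    have h5 : ∀ l ∈ Finset.univ, u i ⬝ᵥ (c l • u l) = if l = i then c i else 0 := by
      intro l _
      rw [dotProduct_smul, hu i l]
      rcases eq_or_ne l i with h6 | h6
      · subst h6; simp
      · simp [h6, Ne.symm h6]
    rw [Finset.sum_congr rfl h5]
    simp
  refine ⟨V, U, Vᵀ * A * U, Uᵀ * B * V, ?_, ?_, ?_, ?_, ?_, ?_, rfl, rfl⟩
  · ext i j
    simp only [Matrix.mul_apply, Matrix.transpose_apply, Matrix.of_apply, Matrix.one_apply, hV]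
    simpa [dotProduct] using hv i j
  · ext i j
    simp only [Matrix.mul_apply, Matrix.transpose_apply, Matrix.of_apply, Matrix.one_apply, hU]
    simpa [dotProduct] using hu i j
  · intro i j hij
    have h : (j : ℕ) + 1 < min m n := lt_of_lt_of_le hij (Nat.le_of_lt_succ (Nat.lt_succ_of_lt i.isLt))
    obtain ⟨c, hc0, _, hcsum⟩ := hA j h
    rw [hcoefA j h c hcsum i]
    exact hc0 i hij
  · intro i j hij
    have h : (j : ℕ) + 1 < min m n := lt_of_lt_of_le hij (Nat.le_of_lt_succ (Nat.lt_succ_of_lt i.isLt))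
    obtain ⟨c, hc0, _, hcsum⟩ := hB j h
    rw [hcoefB j h c hcsum i]
    exact hc0 i hij
  · intro i j hij
    have h : (j : ℕ) + 1 < min m n := hij ▸ i.isLt
    obtain ⟨c, _, hcpos, hcsum⟩ := hA j h
    rw [hcoefA j h c hcsum i]
    have : i = ⟨(j : ℕ) + 1, h⟩ := Fin.ext hij
    rw [this]
    exact hcpos
  · intro i j hij
    have h : (j : ℕ) + 1 < min m n := hij ▸ i.isLt
    obtain ⟨c, _, hcpos, hcsum⟩ := hB j h
    rw [hcoefB j h c hcsum i]
    have : i = ⟨(j : ℕ) + 1, h⟩ := Fin.ext hij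
    rw [this]
    exact hcpos
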